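/- Let α : ℝ³ → ℝ³ be a smooth map whose Jacobian is everywhere symmetric, i.e. ∂_i α_j = ∂_j α_i on ℝ³ for all i,j (so that the one-form α_i dx^i is closed). Define the bracket {f,g}(x) = ⟨α(x), ∇f(x) × ∇g(x)⟩ on smooth functions. Then this bracket satisfies the Jacobi identity {{f,g},h} + {{g,h},f} + {{h,f},g} = 0 for all smooth f,g,h : ℝ³ → ℝ; that is, the bivector P^{ij} = ε^{ijk}α_k obtained from a closed one-form is a Poisson bivector. -/

import Mathlib

open scoped ContDiff

noncomputable section

/-- Partial derivative in the `i`-th coordinate direction. -/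
def pd (i : Fin 3) (f : (Fin 3 → ℝ) → ℝ) : (Fin 3 → ℝ) → ℝ :=
  fun x => fderiv ℝ f x (Pi.single i 1)

/-- Gradient of a function on ℝ³. -/
def grad (f : (Fin 3 → ℝ) → ℝ) (x : Fin 3 → ℝ) : Fin 3 → ℝ :=
  fun i => pd i f x

/-- Cross product on ℝ³. -/
def cross (u v : Fin 3 → ℝ) : Fin 3 → ℝ :=
  ![u 1 * v 2 - u 2 * v 1, u 2 * v 0 - u 0 * v 2, u 0 * v 1 - u 1 * v 0]

/-- Euclidean inner product on ℝ³. -/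
def dot (u v : Fin 3 → ℝ) : ℝ := ∑ i, u i * v i

/-- The bracket {f,g}(x) = ⟨α(x), ∇f(x) × ∇g(x)⟩ of the bivector P^{ij} = ε^{ijk}α_k. -/
def pb (α : (Fin 3 → ℝ) → (Fin 3 → ℝ)) (f g : (Fin 3 → ℝ) → ℝ) : (Fin 3 → ℝ) → ℝ :=
  fun x => dot (α x) (cross (grad f x) (grad g x))

/-- `pd i f` of a smooth function is smooth. -/
lemma contDiff_pd {f : (Fin 3 → ℝ) → ℝ} (hf : ContDiff ℝ ∞ f) (i : Fin 3) :
    ContDiff ℝ ∞ (pd i f) := by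
  have h1 : ContDiff ℝ ∞ (fderiv ℝ f) := hf.fderiv_right (by simp)
  exact h1.clm_apply contDiff_const

/-- Clairaut's theorem: second partial derivatives of a smooth function commute. -/
lemma pd_pd_symm {f : (Fin 3 → ℝ) → ℝ} (hf : ContDiff ℝ ∞ f) (i j : Fin 3) (x : Fin 3 → ℝ) :
    pd i (pd j f) x = pd j (pd i f) x := by
  have hd : DifferentiableAt ℝ (fderiv ℝ f) x :=
    (((hf.fderiv_right (m := ∞) (by simp)).differentiable (by simp)) x :
      DifferentiableAt ℝ (fderiv ℝ f) x)
  have hsym : IsSymmSndFDerivAt ℝ f x :=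
    (hf.contDiffAt).isSymmSndFDerivAt (by simp; exact WithTop.coe_le_coe.mpr le_top)
  have key : ∀ u v : Fin 3 → ℝ,
      fderiv ℝ (fun y => fderiv ℝ f y v) x u = fderiv ℝ (fderiv ℝ f) x u v := by
    intro u v
    rw [fderiv_clm_apply hd (differentiableAt_const v)]
    simp
  show fderiv ℝ (fun y => fderiv ℝ f y (Pi.single j 1)) x (Pi.single i 1)
      = fderiv ℝ (fun y => fderiv ℝ f y (Pi.single i 1)) x (Pi.single j 1)
  rw [key, key]
  exact hsym _ _

/-- Explicit cyclic expansion of the bracket. -/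
lemma pb_expand (α : (Fin 3 → ℝ) → (Fin 3 → ℝ)) (f g : (Fin 3 → ℝ) → ℝ) (x : Fin 3 → ℝ) :
    pb α f g x =
      α x 0 * (pd 1 f x * pd 2 g x - pd 2 f x * pd 1 g x)
    + α x 1 * (pd 2 f x * pd 0 g x - pd 0 f x * pd 2 g x)
    + α x 2 * (pd 0 f x * pd 1 g x - pd 1 f x * pd 0 g x) := by
  simp [pb, dot, cross, grad, Fin.sum_univ_three]

lemma pd_add {p q : (Fin 3 → ℝ) → ℝ} {x : Fin 3 → ℝ}
    (hp : DifferentiableAt ℝ p x) (hq : DifferentiableAt ℝ q x) (m : Fin 3) :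
    pd m (fun y => p y + q y) x = pd m p x + pd m q x := by
  simp only [pd]
  rw [fderiv_fun_add hp hq]
  simp

lemma pd_mul_sub {A u v w z : (Fin 3 → ℝ) → ℝ} {x : Fin 3 → ℝ}
    (hA : DifferentiableAt ℝ A x) (hu : DifferentiableAt ℝ u x)
    (hv : DifferentiableAt ℝ v x) (hw : DifferentiableAt ℝ w x)
    (hz : DifferentiableAt ℝ z x) (m : Fin 3) :
    pd m (fun y => A y * (u y * v y - w y * z y)) x =
      pd m A x * (u x * v x - w x * z x)
      + A x * (pd m u x * v x + u x * pd m v x - (pd m w x * z x + w x * pd m z x)) := by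
  have h1 : DifferentiableAt ℝ (fun y => u y * v y - w y * z y) x :=
    (hu.mul hv).sub (hw.mul hz)
  simp only [pd]
  rw [fderiv_fun_mul hA h1, fderiv_fun_sub (hu.fun_mul hv) (hw.fun_mul hz), fderiv_fun_mul hu hv, fderiv_fun_mul hw hz]
  simp
  ring

/-- Expansion of the derivative of the bracket in terms of partials of `α`, `f`, `g`. -/
lemma pd_pb {α : (Fin 3 → ℝ) → (Fin 3 → ℝ)} {f g : (Fin 3 → ℝ) → ℝ}
    (hα : ContDiff ℝ ∞ α) (hf : ContDiff ℝ ∞ f) (hg : ContDiff ℝ ∞ g)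
    (m : Fin 3) (x : Fin 3 → ℝ) :
    pd m (pb α f g) x =
      pd m (fun y => α y 0) x * (pd 1 f x * pd 2 g x - pd 2 f x * pd 1 g x)
      + α x 0 * (pd m (pd 1 f) x * pd 2 g x + pd 1 f x * pd m (pd 2 g) x
          - (pd m (pd 2 f) x * pd 1 g x + pd 2 f x * pd m (pd 1 g) x))
      + (pd m (fun y => α y 1) x * (pd 2 f x * pd 0 g x - pd 0 f x * pd 2 g x)
      + α x 1 * (pd m (pd 2 f) x * pd 0 g x + pd 2 f x * pd m (pd 0 g) x
          - (pd m (pd 0 f) x * pd 2 g x + pd 0 f x * pd m (pd 2 g) x)))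
      + (pd m (fun y => α y 2) x * (pd 0 f x * pd 1 g x - pd 1 f x * pd 0 g x)
      + α x 2 * (pd m (pd 0 f) x * pd 1 g x + pd 0 f x * pd m (pd 1 g) x
          - (pd m (pd 1 f) x * pd 0 g x + pd 1 f x * pd m (pd 0 g) x))) := by
  have hA : ∀ k : Fin 3, DifferentiableAt ℝ (fun y => α y k) x := fun k =>
    ((contDiff_pi.mp hα k).differentiable (by simp)) x
  have hF : ∀ i : Fin 3, DifferentiableAt ℝ (pd i f) x := fun i =>
    ((contDiff_pd hf i).differentiable (by simp)) x
  have hG : ∀ i : Fin 3, DifferentiableAt ℝ (pd i g) x := fun i =>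
    ((contDiff_pd hg i).differentiable (by simp)) x
  have hfun : pb α f g = fun y =>
      (fun y => α y 0 * (pd 1 f y * pd 2 g y - pd 2 f y * pd 1 g y)) y
      + (fun y => α y 1 * (pd 2 f y * pd 0 g y - pd 0 f y * pd 2 g y)) y
      + (fun y => α y 2 * (pd 0 f y * pd 1 g y - pd 1 f y * pd 0 g y)) y :=
    funext fun y => pb_expand α f g y
  have d0 : DifferentiableAt ℝ
      (fun y => α y 0 * (pd 1 f y * pd 2 g y - pd 2 f y * pd 1 g y)) x :=
    (hA 0).mul (((hF 1).mul (hG 2)).sub ((hF 2).mul (hG 1)))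
  have d1 : DifferentiableAt ℝ
      (fun y => α y 1 * (pd 2 f y * pd 0 g y - pd 0 f y * pd 2 g y)) x :=
    (hA 1).mul (((hF 2).mul (hG 0)).sub ((hF 0).mul (hG 2)))
  have d2 : DifferentiableAt ℝ
      (fun y => α y 2 * (pd 0 f y * pd 1 g y - pd 1 f y * pd 0 g y)) x :=
    (hA 2).mul (((hF 0).mul (hG 1)).sub ((hF 1).mul (hG 0)))
  rw [hfun, pd_add (d0.fun_add d1) d2, pd_add d0 d1,
    pd_mul_sub (hA 0) (hF 1) (hG 2) (hF 2) (hG 1) m,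
    pd_mul_sub (hA 1) (hF 2) (hG 0) (hF 0) (hG 2) m,
    pd_mul_sub (hA 2) (hF 0) (hG 1) (hF 1) (hG 0) m]
/-- **The bivector of a closed one-form is Poisson.**  If α : ℝ³ → ℝ³ is smooth with
everywhere symmetric Jacobian (∂ᵢα_j = ∂_jα_i, i.e. the one-form α_i dxⁱ is closed),
then the bracket {f,g} = ⟨α, ∇f × ∇g⟩ satisfies the Jacobi identity for all smooth
f, g, h. -/
theorem jacobi_of_closed_one_form
    (α : (Fin 3 → ℝ) → (Fin 3 → ℝ)) (hα : ContDiff ℝ ∞ α)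
    (hclosed : ∀ (i j : Fin 3) (x : Fin 3 → ℝ),
      pd i (fun y => α y j) x = pd j (fun y => α y i) x) :
    ∀ f g h : (Fin 3 → ℝ) → ℝ, ContDiff ℝ ∞ f → ContDiff ℝ ∞ g → ContDiff ℝ ∞ h →
      ∀ x, pb α (pb α f g) h x + pb α (pb α g h) f x + pb α (pb α h f) g x = 0 := by
  intro f g h hf hg hh x
  rw [pb_expand α (pb α f g) h x, pb_expand α (pb α g h) f x, pb_expand α (pb α h f) g x,
    pd_pb hα hf hg 0 x, pd_pb hα hf hg 1 x, pd_pb hα hf hg 2 x,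
    pd_pb hα hg hh 0 x, pd_pb hα hg hh 1 x, pd_pb hα hg hh 2 x,
    pd_pb hα hh hf 0 x, pd_pb hα hh hf 1 x, pd_pb hα hh hf 2 x,
    pd_pd_symm hf 1 0 x, pd_pd_symm hf 2 0 x, pd_pd_symm hf 2 1 x,
    pd_pd_symm hg 1 0 x, pd_pd_symm hg 2 0 x, pd_pd_symm hg 2 1 x,
    pd_pd_symm hh 1 0 x, pd_pd_symm hh 2 0 x, pd_pd_symm hh 2 1 x,
    hclosed 1 0 x, hclosed 2 0 x, hclosed 2 1 x]
  ring

end
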